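/- Let Γ = ⟨φ⟩ be a cyclic group of order r, let Δ ⊆ Γ be the subgroup of index s (so s divides r and Δ = ⟨φ^s⟩), and let V be a finite-dimensional k-representation of Δ. Then the Reid–Shepherd-Barron–Tai invariants of V and of its induced Γ-representation satisfy α_γ(V ⊗_{k[Δ]} k[Γ]) = α_{γ|_Δ}(V) + ((s − 1)/2)·dim_k V. -/

import Mathlib

/-- The Reid–Shepherd-Barron–Tai invariant (with respect to the character sending the
chosen generator to `ζ`) of a representation of the cyclic group of order `r`, given by
the action `T` of the chosen generator: `α = (1/r)·Σ_{i=0}^{r−1} i·a_i`, where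
`a_i = dim ker(T − ζ^i·id)` is the multiplicity of the character `ζ^i`. -/
noncomputable def rstInvariant {k M : Type*} [Field k] [AddCommGroup M] [Module k M]
    (r : ℕ) (ζ : k) (T : M →ₗ[k] M) : ℚ :=
  (∑ i ∈ Finset.range r, (i : ℚ) *
      (Module.finrank k (LinearMap.ker (T - ζ ^ i • LinearMap.id)) : ℚ)) / r

/-- The action of the chosen generator `φ` of the cyclic group `Γ = ⟨φ⟩` of order `r` on
the representation induced from a representation `(V, S)` of the index-`s` subgroup
`Δ = ⟨φ^s⟩` (where `S` is the action of `φ^s`), in the standard model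
`V ⊗_{k[Δ]} k[Γ] ≅ ⊕_{i=0}^{s−1} V·φ^i`. -/
noncomputable def inducedGenAction {k V : Type*} [Field k] [AddCommGroup V] [Module k V]
    (s : ℕ) [NeZero s] (S : V →ₗ[k] V) : (Fin s → V) →ₗ[k] (Fin s → V) where
  toFun v j := if j = 0 then S (v (j - 1)) else v (j - 1)
  map_add' u v := by
    funext j; by_cases h : j = 0 <;> simp [h]
  map_smul' t v := by
    funext j; by_cases h : j = 0 <;> simp [h]



open Module LinearMap Finset

section aux

variable {k V : Type*} [Field k] [AddCommGroup V] [Module k V]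

private lemma mem_ker_iff (S : V →ₗ[k] V) (μ : k) (v : V) :
    v ∈ LinearMap.ker (S - μ • LinearMap.id) ↔ S v = μ • v := by
  rw [LinearMap.mem_ker, LinearMap.sub_apply, LinearMap.smul_apply, LinearMap.id_apply,
    sub_eq_zero]

private lemma induced_apply (s : ℕ) [NeZero s] (S : V →ₗ[k] V) (v : Fin s → V) (j : Fin s) :
    inducedGenAction s S v j = if j = 0 then S (v (j - 1)) else v (j - 1) := rfl

/-- Key kernel-dimension lemma: the `μ`-eigenspace of the induced action has the same
dimension as the `μ^s`-eigenspace of `S`. -/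
lemma finrank_ker_induced (s : ℕ) [NeZero s] (S : V →ₗ[k] V) (μ : k) (hμ : μ ≠ 0) :
    Module.finrank k (LinearMap.ker (inducedGenAction s S - μ • LinearMap.id))
      = Module.finrank k (LinearMap.ker (S - μ ^ s • LinearMap.id)) := by
  obtain ⟨s', rfl⟩ := Nat.exists_eq_succ_of_ne_zero (NeZero.ne s)
  -- recurrence: eigenvectors of the induced action are determined by their 0-th entry
  have hrec : ∀ (v : Fin (s' + 1) → V), inducedGenAction (s' + 1) S v = μ • v →
      ∀ n (hn : n < s' + 1), v ⟨n, hn⟩ = (μ⁻¹) ^ n • v 0 := by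
    intro v hv n
    induction n with
    | zero => intro hn; simp
    | succ n ih =>
      intro hn
      have hj : (⟨n + 1, hn⟩ : Fin (s' + 1)) ≠ 0 := by simp [Fin.ext_iff]
      have h1 := congrFun hv ⟨n + 1, hn⟩
      rw [induced_apply, if_neg hj] at h1
      have hsub : (⟨n + 1, hn⟩ : Fin (s' + 1)) - 1 = ⟨n, by omega⟩ := by
        ext; rw [Fin.coe_sub_one, if_neg hj]; simp
      rw [hsub, ih (by omega)] at h1
      have := congrArg (fun x => μ⁻¹ • x) h1
      simp only [Pi.smul_apply, smul_smul, inv_mul_cancel₀ hμ, one_smul] at this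
      rw [← this, pow_succ']
  have h0eig : ∀ (v : Fin (s' + 1) → V), inducedGenAction (s' + 1) S v = μ • v →
      S (v 0) = μ ^ (s' + 1) • v 0 := by
    intro v hv
    have h0 := congrFun hv 0
    rw [induced_apply, if_pos rfl] at h0
    have hsub : (0 : Fin (s' + 1)) - 1 = ⟨s', by omega⟩ := by
      ext; rw [Fin.coe_sub_one, if_pos rfl]
    rw [hsub, hrec v hv s' (by omega), map_smul] at h0
    have := congrArg (fun x => (μ ^ s') • x) h0
    simp only [Pi.smul_apply, smul_smul] at this
    rw [← mul_pow, mul_inv_cancel₀ hμ, one_pow, one_smul] at this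
    rw [this, ← pow_succ]
  refine LinearEquiv.finrank_eq ?_
  refine
    { toFun := fun v => ⟨v.1 0, (mem_ker_iff S _ _).2 (h0eig v.1 ?_)⟩
      map_add' := fun a b => rfl
      map_smul' := fun c a => rfl
      invFun := fun w => ⟨fun j => (μ⁻¹) ^ (j : ℕ) • w.1, (mem_ker_iff _ _ _).2 ?_⟩
      left_inv := ?_
      right_inv := ?_ }
  · exact (mem_ker_iff _ μ _).1 v.2
  · -- invFun lands in the kernel
    funext j
    rw [induced_apply]
    by_cases hj : j = 0
    · subst hj
      rw [if_pos rfl]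
      have hsub : (0 : Fin (s' + 1)) - 1 = ⟨s', by omega⟩ := by
        ext; rw [Fin.coe_sub_one, if_pos rfl]
      have hw : S w.1 = μ ^ (s' + 1) • w.1 := (mem_ker_iff S _ _).1 w.2
      rw [hsub, map_smul, hw]
      simp only [Pi.smul_apply, smul_smul]
      congr 1
      field_simp
      ring_nf
      rw [Fin.val_zero, pow_zero, mul_assoc, ← mul_pow, mul_inv_cancel₀ hμ, one_pow]
    · rw [if_neg hj]
      have hsub : (j : ℕ) - 1 < s' + 1 := by omega
      have hj1 : (j - 1 : Fin (s' + 1)) = ⟨(j : ℕ) - 1, hsub⟩ := by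
        ext; rw [Fin.coe_sub_one, if_neg hj]
      have hjpos : 0 < (j : ℕ) := Nat.pos_of_ne_zero fun h => hj (by ext; simp [h])
      rw [hj1]
      simp only [Pi.smul_apply, smul_smul]
      congr 1
      have : (j : ℕ) = ((j : ℕ) - 1) + 1 := by omega
      rw [this, pow_succ]
      field_simp
      rw [Nat.add_sub_cancel]
  · intro v
    ext j
    have h := hrec v.1 ((mem_ker_iff _ μ _).1 v.2) (j : ℕ) j.isLt
    simpa using h.symm
  · intro w
    ext
    simp
end aux

section sumlemma

variable {k V : Type*} [Field k] [IsAlgClosed k] [CharZero k]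
  [AddCommGroup V] [Module k V] [FiniteDimensional k V]

/-- An endomorphism of finite order is diagonalizable: the eigenspace dimensions sum to
the full dimension. -/
lemma sum_finrank_ker_eq (m : ℕ) (hm : 0 < m) (ξ : k) (hξ : IsPrimitiveRoot ξ m)
    (S : V →ₗ[k] V) (hS : S ^ m = 1) :
    ∑ j ∈ Finset.range m, Module.finrank k (LinearMap.ker (S - ξ ^ j • LinearMap.id))
      = Module.finrank k V := by
  haveI : NeZero m := ⟨hm.ne'⟩
  have hker : ∀ μ : k, LinearMap.ker (S - μ • LinearMap.id) = Module.End.eigenspace S μ := by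
    intro μ
    ext x
    rw [mem_ker_iff, Module.End.mem_eigenspace_iff]
  -- S is semisimple
  have hmk : (m : k) ≠ 0 := Nat.cast_ne_zero.mpr hm.ne'
  have hsq : Squarefree (Polynomial.X ^ m - Polynomial.C (1 : k)) :=
    (Polynomial.separable_X_pow_sub_C (1 : k) hmk one_ne_zero).squarefree
  have haev : Polynomial.aeval (S : Module.End k V)
      (Polynomial.X ^ m - Polynomial.C (1 : k)) = 0 := by
    simp [hS]
  have hss : Module.End.IsSemisimple (S : Module.End k V) :=
    Module.End.isSemisimple_of_squarefree_aeval_eq_zero hsq haev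
  have hfs := hss.isFinitelySemisimple
  have htop : ⨆ μ : k, Module.End.eigenspace S μ = ⊤ := by
    have := Module.End.iSup_maxGenEigenspace_eq_top (S : Module.End k V)
    simp_rw [hfs.maxGenEigenspace_eq_eigenspace] at this
    exact this
  -- eigenvalues are m-th roots of unity
  have hvals : ∀ μ : k, Module.End.eigenspace S μ ≠ ⊥ → ∃ j < m, ξ ^ j = μ := by
    intro μ h
    obtain ⟨x, hx, hx0⟩ := Submodule.exists_mem_ne_zero_of_ne_bot h
    have hSx : S x = μ • x := Module.End.mem_eigenspace_iff.1 hx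
    have hpow : ∀ n : ℕ, (S ^ n) x = μ ^ n • x := by
      intro n
      induction n with
      | zero => simp
      | succ n ih =>
        rw [pow_succ', Module.End.mul_apply, ih, map_smul, hSx, smul_smul, ← pow_succ]
    have hx1 : x = μ ^ m • x := by
      have := hpow m
      rwa [hS, Module.End.one_apply] at this
    have hμm : μ ^ m = 1 := by
      by_contra hne
      have : (μ ^ m - 1) • x = 0 := by rw [sub_smul, one_smul, ← hx1, sub_self]
      rcases smul_eq_zero.1 this with h | h
      · exact hne (by linear_combination h)
      · exact hx0 h
    exact hξ.eq_pow_of_pow_eq_one hμm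
  set p : Fin m → Submodule k V := fun j => Module.End.eigenspace S (ξ ^ (j : ℕ)) with hp
  have hinj : Function.Injective (fun j : Fin m => ξ ^ (j : ℕ)) := fun a b hab =>
    Fin.ext (hξ.pow_inj a.isLt b.isLt hab)
  have hindep : iSupIndep p := (Module.End.eigenspaces_iSupIndep (S : Module.End k V)).comp hinj
  have hsup : ⨆ j, p j = ⊤ := by
    refine le_antisymm le_top ?_
    rw [← htop]
    refine iSup_le fun μ => ?_
    by_cases h : Module.End.eigenspace S μ = ⊥
    · rw [h]; exact bot_le
    · obtain ⟨j, hj, rfl⟩ := hvals μ h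
      exact le_iSup p ⟨j, hj⟩
  have hint : DirectSum.IsInternal p :=
    DirectSum.isInternal_submodule_of_iSupIndep_of_iSup_eq_top hindep hsup
  have e := LinearEquiv.ofBijective (DirectSum.coeLinearMap p) hint
  have hfr : Module.finrank k V = ∑ j : Fin m, Module.finrank k (p j) := by
    rw [← e.finrank_eq, finrank_directSum]
  rw [hfr, Finset.sum_range]
  exact Finset.sum_congr rfl fun j _ => by rw [hker]

end sumlemma

private lemma sum_range_mul_eq {M : Type*} [AddCommMonoid M] (f : ℕ → M) (s m : ℕ) :
    ∑ i ∈ Finset.range (s * m), f i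
      = ∑ t ∈ Finset.range s, ∑ j ∈ Finset.range m, f (t * m + j) := by
  induction s with
  | zero => simp
  | succ n ih => rw [Nat.succ_mul, Finset.sum_range_add, ih, Finset.sum_range_succ]

/-- Lemma 8.6 (lem-induced).  Let `Γ = ⟨φ⟩` be cyclic of order `r`, `Δ = ⟨φ^s⟩` the
subgroup of index `s`, and `ζ` a primitive `r`-th root of unity (the value of the chosen
generator `γ` of the character group of `Γ` on `φ`; the generator `γ|_Δ` of the character
group of `Δ` sends `φ^s` to `ζ^s`).  For a finite-dimensional `Δ`-representation `(V, S)`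
(so `S^{r/s} = 1`), the Reid–Shepherd-Barron–Tai invariants satisfy
`α_γ(V ⊗_{k[Δ]} k[Γ]) = α_{γ|_Δ}(V) + ((s−1)/2)·dim V`. -/
theorem rstInvariant_induced
    {k V : Type*} [Field k] [IsAlgClosed k] [CharZero k]
    [AddCommGroup V] [Module k V] [FiniteDimensional k V]
    (r s : ℕ) [NeZero s] (hsr : s ∣ r) (hr : 0 < r)
    (ζ : k) (hζ : IsPrimitiveRoot ζ r)
    (S : V →ₗ[k] V) (hS : S ^ (r / s) = 1) :
    rstInvariant r ζ (inducedGenAction s S)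
      = rstInvariant (r / s) (ζ ^ s) S
        + ((s : ℚ) - 1) / 2 * (Module.finrank k V : ℚ) := by
  set m := r / s with hm_def
  have hrm : s * m = r := Nat.mul_div_cancel' hsr
  have hm : 0 < m := Nat.div_pos (Nat.le_of_dvd hr hsr) (NeZero.pos s)
  have hs : 0 < s := NeZero.pos s
  have hξ : IsPrimitiveRoot (ζ ^ s) m := hζ.pow hr hrm.symm
  have hζ0 : ζ ≠ 0 := hζ.ne_zero hr.ne'
  -- eigenspace dimensions of S
  set b : ℕ → ℕ := fun j =>
    Module.finrank k (LinearMap.ker (S - (ζ ^ s) ^ j • LinearMap.id)) with hb_def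
  -- each summand of the induced invariant
  have hcoef : ∀ i : ℕ,
      Module.finrank k (LinearMap.ker (inducedGenAction s S - ζ ^ i • LinearMap.id)) = b i := by
    intro i
    have hpow : (ζ ^ i) ^ s = (ζ ^ s) ^ i := by rw [← pow_mul, ← pow_mul, mul_comm]
    rw [finrank_ker_induced s S (ζ ^ i) (pow_ne_zero i hζ0), hpow, hb_def]
  have hperiod : ∀ t j : ℕ, b (t * m + j) = b j := by
    intro t j
    have h1 : ((ζ : k) ^ s) ^ m = 1 := by rw [← pow_mul, hrm, hζ.pow_eq_one]
    have : (ζ ^ s) ^ (t * m + j) = (ζ ^ s) ^ j := by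
      rw [pow_add, mul_comm t m, pow_mul, h1, one_pow, one_mul]
    rw [hb_def]
    simp only
    rw [this]
  have hsum : ∑ j ∈ Finset.range m, (b j : ℚ) = (Module.finrank k V : ℚ) := by
    rw [← Nat.cast_sum]
    norm_cast
    exact sum_finrank_ker_eq m hm (ζ ^ s) hξ S hS
  -- Gauss sum
  have hgauss : (∑ t ∈ Finset.range s, (t : ℚ)) = (s : ℚ) * ((s : ℚ) - 1) / 2 := by
    have h2 := Finset.sum_range_id_mul_two s
    have : ((∑ i ∈ Finset.range s, i : ℕ) : ℚ) * 2 = (s : ℚ) * ((s : ℚ) - 1) := by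
      rw [← Nat.cast_ofNat, ← Nat.cast_mul, h2, Nat.cast_mul, Nat.cast_sub hs]
      simp
    rw [Nat.cast_sum] at this
    linarith
  -- expand the sums
  rw [rstInvariant, rstInvariant]
  have hrw : ∑ i ∈ Finset.range r, (i : ℚ) *
      (Module.finrank k (LinearMap.ker (inducedGenAction s S - ζ ^ i • LinearMap.id)) : ℚ)
      = ∑ i ∈ Finset.range r, (i : ℚ) * (b i : ℚ) := by
    refine Finset.sum_congr rfl fun i _ => by rw [hcoef]
  rw [hrw, ← hrm, sum_range_mul_eq (fun i => (i : ℚ) * (b i : ℚ)) s m]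
  have hinner : ∀ t ∈ Finset.range s,
      ∑ j ∈ Finset.range m, ((t * m + j : ℕ) : ℚ) * (b (t * m + j) : ℚ)
        = (t : ℚ) * (m : ℚ) * (Module.finrank k V : ℚ)
          + ∑ j ∈ Finset.range m, (j : ℚ) * (b j : ℚ) := by
    intro t _
    have : ∀ j ∈ Finset.range m, ((t * m + j : ℕ) : ℚ) * (b (t * m + j) : ℚ)
        = (t : ℚ) * (m : ℚ) * (b j : ℚ) + (j : ℚ) * (b j : ℚ) := by
      intro j _
      rw [hperiod t j]
      push_cast
      ring
    rw [Finset.sum_congr rfl this, Finset.sum_add_distrib, ← Finset.mul_sum, hsum]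
  rw [Finset.sum_congr rfl hinner, Finset.sum_add_distrib, Finset.sum_const,
    Finset.card_range]
  simp only [← Finset.sum_mul]
  rw [hgauss]
  have hms : ((s * m : ℕ) : ℚ) = (s : ℚ) * (m : ℚ) := by push_cast; ring
  rw [hms]
  have hbS : ∀ j ∈ Finset.range m, (j : ℚ) *
      (Module.finrank k (LinearMap.ker (S - (ζ ^ s) ^ j • LinearMap.id)) : ℚ)
      = (j : ℚ) * (b j : ℚ) := fun j _ => rfl
  rw [Finset.sum_congr rfl hbS]
  have hsQ : (s : ℚ) ≠ 0 := Nat.cast_ne_zero.mpr hs.ne'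
  have hmQ : (m : ℚ) ≠ 0 := Nat.cast_ne_zero.mpr hm.ne'
  field_simp
  ring
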